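/- Let w be a binary word starting with 0 that avoids factors 000 and 111, with canonical factorization w = A_0 a_1 a_1 A_1 ... a_k a_k A_k and associated sequence f(w) = (n_0,...,n_k) where n_0 = |A_0 a_1|, n_i = |a_i A_i a_{i+1}| for 0 < i < k, and n_k = |a_k A_k|. If there exists an index j with n_{j-1} ≥ n_j and n_j ≤ n_{j+1}, then w contains an instance of the pattern xx^Rx. -/

import Mathlib

/-- A binary word avoids the pattern `x xᴿ x`: no factor `u ++ u.reverse ++ u` with `u` nonempty. -/
def AvoidsP (w : List Bool) : Prop :=
  ¬ ∃ u : List Bool, u ≠ [] ∧ (u ++ u.reverse ++ u) <:+: w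

/-- A binary word avoids the factors `000` and `111`. -/
def AvoidsCubes (w : List Bool) : Prop :=
  ¬ ([false, false, false] <:+: w) ∧ ¬ ([true, true, true] <:+: w)

/-- Alternating word: a prefix of `0101…` or `1010…`. -/
def Alt (A : List Bool) : Prop := A.Chain' (· ≠ ·)

/-- Glue the blocks `A_0 a_1 a_1 A_1 a_2 a_2 ⋯ a_k a_k A_k`. -/
def glue : List (List Bool) → List Bool → List Bool
  | [], _ => []
  | [A], _ => A
  | A :: As, [] => A ++ glue As []
  | A :: As, b :: bs => A ++ [b, b] ++ glue As bs

/-- `IsFact As bs w` : `w = A_0 b_1 b_1 A_1 ⋯ b_k b_k A_k` with all `A_i` alternating. -/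
def IsFact (As : List (List Bool)) (bs : List Bool) (w : List Bool) : Prop :=
  As.length = bs.length + 1 ∧ (∀ A ∈ As, Alt A) ∧ w = glue As bs

/-- Middle and final entries of the associated sequence: `n_i = |a_i A_i a_{i+1}|`, `n_k = |a_k A_k|`. -/
def seqMid : List (List Bool) → List ℕ
  | [] => []
  | [A] => [A.length + 1]
  | A :: As => (A.length + 2) :: seqMid As

/-- The sequence `f(w) = (n_0, …, n_k)` associated to the canonical factorization. -/
def seqOf : List (List Bool) → List ℕ
  | [] => []
  | [A] => if A.isEmpty then [] else [A.length]
  | A :: As => (A.length + 1) :: seqMid As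

/-- No index `j` with `d_{j-1} ≥ d_j` and `d_j ≤ d_{j+1}`. -/
def NoValley (d : List ℕ) : Prop :=
  ∀ j : ℕ, 1 ≤ j → j + 1 < d.length →
    ¬ (d.getD (j - 1) 0 ≥ d.getD j 0 ∧ d.getD j 0 ≤ d.getD (j + 1) 0)

/-- Membership in the set `X` of sequences. -/
def InX (d : List ℕ) : Prop := (∀ x ∈ d, 0 < x) ∧ NoValley d

/-- Type 1 (strongly unimodal): strictly increasing to a unique maximum, then strictly decreasing. -/
def Type1 (d : List ℕ) : Prop :=
  (∀ x ∈ d, 0 < x) ∧ d ≠ [] ∧ ∃ j < d.length,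
    (∀ i : ℕ, i + 1 ≤ j → d.getD i 0 < d.getD (i + 1) 0) ∧
    (∀ i : ℕ, j ≤ i → i + 1 < d.length → d.getD i 0 > d.getD (i + 1) 0)

/-- Type 2: strictly increasing, two equal consecutive maximal terms, then strictly decreasing. -/
def Type2 (d : List ℕ) : Prop :=
  (∀ x ∈ d, 0 < x) ∧ ∃ j, 1 ≤ j ∧ j < d.length ∧
    d.getD (j - 1) 0 = d.getD j 0 ∧
    (∀ i : ℕ, i + 1 ≤ j - 1 → d.getD i 0 < d.getD (i + 1) 0) ∧
    (∀ i : ℕ, j ≤ i → i + 1 < d.length → d.getD i 0 > d.getD (i + 1) 0)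

/-- `v n` : number of sequences in `X` of weight `n`. -/
noncomputable def v (n : ℕ) : ℕ := Nat.card {d : List ℕ // InX d ∧ d.sum = n}

/-- A strict partition, viewed as a finite set of positive integers. -/
def StrictPartition (s : Finset ℕ) : Prop := 0 ∉ s

/-- `utilde n` : number of pairs of partitions into distinct parts of total weight `n`. -/
noncomputable def utilde (n : ℕ) : ℕ :=
  Nat.card {p : Finset ℕ × Finset ℕ //
    StrictPartition p.1 ∧ StrictPartition p.2 ∧ p.1.sum id + p.2.sum id = n}

/-- `c n` : number of binary words of length `n` avoiding `x xᴿ x`. -/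
noncomputable def c (n : ℕ) : ℕ := Nat.card {w : List Bool // w.length = n ∧ AvoidsP w}

/-- The word `(01)^n`. -/
def w01 (n : ℕ) : List Bool := (List.replicate n [false, true]).flatten

/-- The word `(10)^n`. -/
def w10 (n : ℕ) : List Bool := (List.replicate n [true, false]).flatten

section Helpers

lemma no_triple {w : List Bool} (hc : AvoidsCubes w) (b : Bool) : ¬ ([b,b,b] <:+: w) := by
  cases b
  · exact hc.1
  · exact hc.2

lemma alt_eq_of : ∀ (u v : List Bool), Alt u → Alt v →
    u.length = v.length → u.head? = v.head? → u = v := by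
  intro u
  induction u with
  | nil => intro v _ _ hl _; cases v <;> simp_all
  | cons a u ih =>
    intro v hu hv hl hh
    cases v with
    | nil => simp at hl
    | cons b v =>
      simp only [List.head?_cons, Option.some.injEq] at hh
      subst hh
      simp only [List.length_cons, Nat.add_right_cancel_iff] at hl
      have hu' := List.isChain_cons.1 hu
      have hv' := List.isChain_cons.1 hv
      have hhead : u.head? = v.head? := by
        cases u with
        | nil => cases v <;> simp_all
        | cons c u' =>
          cases v with
          | nil => simp at hl
          | cons d v' =>
            have h1 := hu'.1 c (by simp)
            have h2 := hv'.1 d (by simp)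
            cases a <;> cases c <;> cases d <;> simp_all
      rw [ih v hu'.2 hv'.2 hl hhead]

lemma alt_reverse {u : List Bool} (h : Alt u) : Alt u.reverse := by
  show List.IsChain _ u.reverse
  rw [List.isChain_reverse]
  exact h.imp (fun a b hab => (Ne.symm hab : _))

lemma build {w : List Bool} (C M D : List Bool) (m : ℕ)
    (hC : Alt C) (hM : Alt M) (hD : Alt D)
    (hMl : M.length = m) (hm : 1 ≤ m) (hCl : m ≤ C.length) (hDl : m ≤ D.length)
    (hCM : C.getLast? = M.head?) (hMD : M.getLast? = D.head?)
    (hinf : C ++ M ++ D <:+: w) : ¬ AvoidsP w := by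
  intro hw
  set L := C.drop (C.length - m) with hLdef
  set R := D.take m with hRdef
  have hLlen : L.length = m := by simp [hLdef]; omega
  have hRlen : R.length = m := by simp [hRdef]; omega
  have hLalt : Alt L := hC.drop _
  have hRalt : Alt R := hD.take _
  have hLlast : L.getLast? = C.getLast? := by
    rw [hLdef, List.getLast?_drop, if_neg (by omega)]
  have hRhead : R.head? = D.head? := by
    rw [hRdef, List.head?_take, if_neg (by omega)]
  have hML : M = L.reverse := by
    refine alt_eq_of _ _ hM (alt_reverse hLalt) (by simp [hLlen, hMl]) ?_
    rw [List.head?_reverse, hLlast, hCM]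
  have hRL : R = L := by
    refine alt_eq_of _ _ hRalt hLalt (by rw [hRlen, hLlen]) ?_
    rw [hRhead, ← hMD, hML, List.getLast?_reverse]
  have hne : L ≠ [] := by intro h; rw [h] at hLlen; simp at hLlen; omega
  apply hw
  refine ⟨L, hne, ?_⟩
  have h1 : L ++ M ++ R <:+: C ++ M ++ D := by
    refine ⟨C.take (C.length - m), D.drop m, ?_⟩
    conv_rhs => rw [← List.take_append_drop (C.length - m) C, ← List.take_append_drop m D]
    simp only [hRdef, hLdef, List.append_assoc]
  have key : L ++ L.reverse ++ L = L ++ M ++ R := by rw [← hML, hRL]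
  rw [key]
  exact h1.trans hinf

lemma fact_last {w X Y A : List Bool} {b : Bool} (hc : AvoidsCubes w)
    (hw : w = X ++ A ++ [b, b] ++ Y) : A.getLast? ≠ some b := by
  intro h
  obtain ⟨t, rfl⟩ := List.getLast?_eq_some_iff.1 h
  exact no_triple hc b ⟨X ++ t, Y, by simp [hw]⟩

lemma fact_head {w X Y A : List Bool} {b : Bool} (hc : AvoidsCubes w)
    (hw : w = X ++ [b, b] ++ A ++ Y) : A.head? ≠ some b := by
  intro h
  obtain ⟨t, rfl⟩ : ∃ t, A = b :: t := by
    cases A with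
    | nil => simp at h
    | cons a t => exact ⟨t, by simp_all⟩
  exact no_triple hc b ⟨X, t ++ Y, by simp [hw]⟩

lemma fact_pair {w X Y : List Bool} {b b' : Bool} (hc : AvoidsCubes w)
    (hw : w = X ++ [b, b] ++ [b', b'] ++ Y) : b ≠ b' := by
  intro h
  subst h
  exact no_triple hc b ⟨X, b :: Y, by simp [hw]⟩

lemma alt_cons {A : List Bool} {b : Bool} (hA : Alt A) (h : A.head? ≠ some b) :
    Alt (b :: A) := by
  refine List.isChain_cons.2 ⟨?_, hA⟩
  intro y hy he
  subst he
  exact h hy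

lemma alt_snoc {A : List Bool} {b : Bool} (hA : Alt A) (h : A.getLast? ≠ some b) :
    Alt (A ++ [b]) := by
  refine List.isChain_append.2 ⟨hA, List.isChain_singleton b, ?_⟩
  intro x hx y hy
  simp only [List.head?_cons, Option.mem_def, Option.some.injEq] at hy
  subst hy
  intro he
  subst he
  exact h hx

lemma alt_wrap {A : List Bool} {b b' : Bool} (hA : Alt A)
    (h1 : A.head? ≠ some b) (h2 : A.getLast? ≠ some b') (h3 : A = [] → b ≠ b') :
    Alt (b :: (A ++ [b'])) := by
  refine alt_cons (alt_snoc hA h2) ?_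
  cases A with
  | nil => simpa using Ne.symm (h3 rfl)
  | cons a t => simpa using fun h => h1 (by simp [h])

lemma avoidsCubes_infix {v w : List Bool} (h : v <:+: w) (hc : AvoidsCubes w) :
    AvoidsCubes v :=
  ⟨fun h' => hc.1 (h'.trans h), fun h' => hc.2 (h'.trans h)⟩

lemma notAvoidsP_infix {v w : List Bool} (h : v <:+: w) (hv : ¬ AvoidsP v) :
    ¬ AvoidsP w := by
  intro hw
  exact hv fun ⟨u, hu, hi⟩ => hw ⟨u, hu, hi.trans h⟩

lemma seqMid_length : ∀ (L : List (List Bool)), (seqMid L).length = L.length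
  | [] => rfl
  | [_] => rfl
  | A :: B :: t => by simp [seqMid, seqMid_length (B :: t)]

end Helpers

lemma main_lemma : ∀ (As : List (List Bool)) (bs : List Bool) (j : ℕ),
    As.length = bs.length + 1 → (∀ A ∈ As, Alt A) →
    AvoidsCubes (glue As bs) →
    1 ≤ j → j + 1 < (seqOf As).length →
    (seqOf As).getD (j - 1) 0 ≥ (seqOf As).getD j 0 →
    (seqOf As).getD j 0 ≤ (seqOf As).getD (j + 1) 0 →
    ¬ AvoidsP (glue As bs) := by
  intro As
  induction As with
  | nil =>
    intro bs j _ _ _ hj1 hj2 _ _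
    simp [seqOf] at hj2
  | cons A0 rest ih =>
    intro bs j hlen halt hc hj1 hj2 hge hle
    cases rest with
    | nil =>
      have : (seqOf [A0]).length ≤ 1 := by
        by_cases h : A0.isEmpty <;> simp [seqOf, h]
      omega
    | cons A1 rest1 =>
    cases rest1 with
    | nil =>
      have : (seqOf [A0, A1]).length = 2 := by simp [seqOf, seqMid]
      omega
    | cons A2 rest2 =>
    -- bs has at least two elements
    cases bs with
    | nil => simp at hlen
    | cons b1 bs' =>
    cases bs' with
    | nil => simp at hlen
    | cons b2 bs2 =>
    have hA0 : Alt A0 := halt A0 (by simp)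
    have hA1 : Alt A1 := halt A1 (by simp)
    have hA2 : Alt A2 := halt A2 (by simp)
    have hseq : seqOf (A0 :: A1 :: A2 :: rest2)
        = (A0.length + 1) :: (A1.length + 2) :: seqMid (A2 :: rest2) := by
      simp [seqOf, seqMid]
    have hslen : (seqOf (A0 :: A1 :: A2 :: rest2)).length = 3 + rest2.length := by
      rw [hseq]; simp [seqMid_length]; omega
    obtain _ | _ | _ | j' := j
    · omega
    · -- j = 1
      rw [hseq] at hge hle
      simp only [Nat.add_sub_cancel, List.getD_cons_zero, List.getD_cons_succ] at hge hle
      cases rest2 with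
      | nil =>
        -- three blocks
        cases bs2 with
        | cons x xs => simp at hlen
        | nil =>
        have hw : glue [A0, A1, A2] [b1, b2]
            = A0 ++ [b1, b1] ++ A1 ++ [b2, b2] ++ A2 := by simp [glue]
        rw [hw] at hc ⊢
        simp only [seqMid, List.getD_cons_zero] at hge hle
        refine build (A0 ++ [b1]) (b1 :: (A1 ++ [b2])) (b2 :: A2) (A1.length + 2)
          ?_ ?_ ?_ (by simp) (by omega) (by simp; omega) (by simp; omega) ?_ ?_ ?_
        · exact alt_snoc hA0 (fact_last (X := []) (Y := A1 ++ [b2, b2] ++ A2) hc (by simp))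
        · refine alt_wrap hA1 ?_ ?_ ?_
          · exact fact_head (X := A0) (Y := [b2, b2] ++ A2) hc (by simp)
          · exact fact_last (X := A0 ++ [b1, b1]) (Y := A2) hc (by simp)
          · intro h
            exact fact_pair (X := A0) (Y := A2) hc (by simp [h])
        · exact alt_cons hA2 (fact_head (X := A0 ++ [b1, b1] ++ A1) (Y := []) hc (by simp))
        · simp [List.getLast?_concat]
        · rw [← List.cons_append, List.getLast?_concat]; simp
        · exact ⟨[], [], by simp⟩
      | cons A3 rest3 =>
        obtain ⟨b3, bs3, rfl⟩ : ∃ b3 bs3, bs2 = b3 :: bs3 := by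
          cases bs2 with
          | nil => simp at hlen
          | cons x xs => exact ⟨x, xs, rfl⟩
        have hw : glue (A0 :: A1 :: A2 :: A3 :: rest3) (b1 :: b2 :: b3 :: bs3)
            = A0 ++ [b1, b1] ++ A1 ++ [b2, b2] ++ A2 ++ [b3, b3] ++ glue (A3 :: rest3) bs3 := by
          simp [glue]
        rw [hw] at hc ⊢
        simp only [seqMid, List.getD_cons_zero] at hge hle
        set T := glue (A3 :: rest3) bs3 with hT
        refine build (A0 ++ [b1]) (b1 :: (A1 ++ [b2])) (b2 :: (A2 ++ [b3])) (A1.length + 2)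
          ?_ ?_ ?_ (by simp) (by omega) (by simp; omega) (by simp; omega) ?_ ?_ ?_
        · exact alt_snoc hA0
            (fact_last (X := []) (Y := A1 ++ [b2, b2] ++ A2 ++ [b3, b3] ++ T) hc (by simp))
        · refine alt_wrap hA1 ?_ ?_ ?_
          · exact fact_head (X := A0) (Y := [b2, b2] ++ A2 ++ [b3, b3] ++ T) hc (by simp)
          · exact fact_last (X := A0 ++ [b1, b1]) (Y := A2 ++ [b3, b3] ++ T) hc (by simp)
          · intro h
            exact fact_pair (X := A0) (Y := A2 ++ [b3, b3] ++ T) hc (by simp [h])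
        · refine alt_wrap hA2 ?_ ?_ ?_
          · exact fact_head (X := A0 ++ [b1, b1] ++ A1) (Y := [b3, b3] ++ T) hc (by simp)
          · exact fact_last (X := A0 ++ [b1, b1] ++ A1 ++ [b2, b2]) (Y := T) hc (by simp)
          · intro h
            exact fact_pair (X := A0 ++ [b1, b1] ++ A1) (Y := T) hc (by simp [h])
        · simp [List.getLast?_concat]
        · rw [← List.cons_append, List.getLast?_concat]; simp
        · exact ⟨[], [b3] ++ T, by simp⟩
    · -- j = 2
      cases rest2 with
      | nil =>
        rw [hslen] at hj2; simp at hj2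
      | cons A3 rest3 =>
      obtain ⟨b3, bs3, rfl⟩ : ∃ b3 bs3, bs2 = b3 :: bs3 := by
        cases bs2 with
        | nil => simp at hlen
        | cons x xs => exact ⟨x, xs, rfl⟩
      have hA3 : Alt A3 := halt A3 (by simp)
      rw [hseq] at hge hle
      simp only [Nat.add_sub_cancel, List.getD_cons_succ, List.getD_cons_zero] at hge hle
      cases rest3 with
      | nil =>
        cases bs3 with
        | cons x xs => simp at hlen
        | nil =>
        have hw : glue [A0, A1, A2, A3] [b1, b2, b3]
            = A0 ++ [b1, b1] ++ A1 ++ [b2, b2] ++ A2 ++ [b3, b3] ++ A3 := by simp [glue]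
        rw [hw] at hc ⊢
        simp only [seqMid, List.getD_cons_zero, List.getD_cons_succ] at hge hle
        refine build (b1 :: (A1 ++ [b2])) (b2 :: (A2 ++ [b3])) (b3 :: A3) (A2.length + 2)
          ?_ ?_ ?_ (by simp) (by omega) (by simp; omega) (by simp; omega) ?_ ?_ ?_
        · refine alt_wrap hA1 ?_ ?_ ?_
          · exact fact_head (X := A0) (Y := [b2, b2] ++ A2 ++ [b3, b3] ++ A3) hc (by simp)
          · exact fact_last (X := A0 ++ [b1, b1]) (Y := A2 ++ [b3, b3] ++ A3) hc (by simp)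
          · intro h
            exact fact_pair (X := A0) (Y := A2 ++ [b3, b3] ++ A3) hc (by simp [h])
        · refine alt_wrap hA2 ?_ ?_ ?_
          · exact fact_head (X := A0 ++ [b1, b1] ++ A1) (Y := [b3, b3] ++ A3) hc (by simp)
          · exact fact_last (X := A0 ++ [b1, b1] ++ A1 ++ [b2, b2]) (Y := A3) hc (by simp)
          · intro h
            exact fact_pair (X := A0 ++ [b1, b1] ++ A1) (Y := A3) hc (by simp [h])
        · exact alt_cons hA3
            (fact_head (X := A0 ++ [b1, b1] ++ A1 ++ [b2, b2] ++ A2) (Y := []) hc (by simp))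
        · rw [← List.cons_append, List.getLast?_concat]; simp
        · rw [← List.cons_append, List.getLast?_concat]; simp
        · exact ⟨A0 ++ [b1], [], by simp⟩
      | cons A4 rest4 =>
        obtain ⟨b4, bs4, rfl⟩ : ∃ b4 bs4, bs3 = b4 :: bs4 := by
          cases bs3 with
          | nil => simp at hlen
          | cons x xs => exact ⟨x, xs, rfl⟩
        have hw : glue (A0 :: A1 :: A2 :: A3 :: A4 :: rest4) (b1 :: b2 :: b3 :: b4 :: bs4)
            = A0 ++ [b1, b1] ++ A1 ++ [b2, b2] ++ A2 ++ [b3, b3] ++ A3 ++ [b4, b4]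
              ++ glue (A4 :: rest4) bs4 := by
          simp [glue]
        rw [hw] at hc ⊢
        simp only [seqMid, List.getD_cons_zero, List.getD_cons_succ] at hge hle
        set T := glue (A4 :: rest4) bs4 with hT
        refine build (b1 :: (A1 ++ [b2])) (b2 :: (A2 ++ [b3])) (b3 :: (A3 ++ [b4])) (A2.length + 2)
          ?_ ?_ ?_ (by simp) (by omega) (by simp; omega) (by simp; omega) ?_ ?_ ?_
        · refine alt_wrap hA1 ?_ ?_ ?_
          · exact fact_head (X := A0) (Y := [b2, b2] ++ A2 ++ [b3, b3] ++ A3 ++ [b4, b4] ++ T) hc (by simp)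
          · exact fact_last (X := A0 ++ [b1, b1]) (Y := A2 ++ [b3, b3] ++ A3 ++ [b4, b4] ++ T) hc (by simp)
          · intro h
            exact fact_pair (X := A0) (Y := A2 ++ [b3, b3] ++ A3 ++ [b4, b4] ++ T) hc (by simp [h])
        · refine alt_wrap hA2 ?_ ?_ ?_
          · exact fact_head (X := A0 ++ [b1, b1] ++ A1) (Y := [b3, b3] ++ A3 ++ [b4, b4] ++ T) hc (by simp)
          · exact fact_last (X := A0 ++ [b1, b1] ++ A1 ++ [b2, b2]) (Y := A3 ++ [b4, b4] ++ T) hc (by simp)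
          · intro h
            exact fact_pair (X := A0 ++ [b1, b1] ++ A1) (Y := A3 ++ [b4, b4] ++ T) hc (by simp [h])
        · refine alt_wrap hA3 ?_ ?_ ?_
          · exact fact_head (X := A0 ++ [b1, b1] ++ A1 ++ [b2, b2] ++ A2) (Y := [b4, b4] ++ T) hc (by simp)
          · exact fact_last (X := A0 ++ [b1, b1] ++ A1 ++ [b2, b2] ++ A2 ++ [b3, b3]) (Y := T) hc (by simp)
          · intro h
            exact fact_pair (X := A0 ++ [b1, b1] ++ A1 ++ [b2, b2] ++ A2) (Y := T) hc (by simp [h])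
        · rw [← List.cons_append, List.getLast?_concat]; simp
        · rw [← List.cons_append, List.getLast?_concat]; simp
        · exact ⟨A0 ++ [b1], [b4] ++ T, by simp⟩
    · -- j = j' + 3 : inductive step
      have hwsplit : glue (A0 :: A1 :: A2 :: rest2) (b1 :: b2 :: bs2)
          = A0 ++ [b1, b1] ++ glue (A1 :: A2 :: rest2) (b2 :: bs2) := by
        simp [glue]
      have hinf : glue (A1 :: A2 :: rest2) (b2 :: bs2) <:+: glue (A0 :: A1 :: A2 :: rest2) (b1 :: b2 :: bs2) :=
        ⟨A0 ++ [b1, b1], [], by simp [hwsplit]⟩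
      have hseq' : seqOf (A1 :: A2 :: rest2) = (A1.length + 1) :: seqMid (A2 :: rest2) := by
        simp [seqOf]
      have hgetD : ∀ i, 1 ≤ i →
          (seqOf (A1 :: A2 :: rest2)).getD i 0
            = (seqOf (A0 :: A1 :: A2 :: rest2)).getD (i + 1) 0 := by
        intro i hi
        obtain ⟨i', rfl⟩ : ∃ i', i = i' + 1 := ⟨i - 1, by omega⟩
        rw [hseq, hseq']
        simp [List.getD_cons_succ]
      have hlen' : (seqOf (A1 :: A2 :: rest2)).length
          = (seqOf (A0 :: A1 :: A2 :: rest2)).length - 1 := by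
        rw [hseq, hseq']; simp
      refine notAvoidsP_infix hinf ?_
      refine ih (b2 :: bs2) (j' + 2) (by simp at hlen ⊢; omega) (fun A hA => halt A (by simp [hA]))
        (avoidsCubes_infix hinf hc) (by omega) (by omega) ?_ ?_
      · rw [hgetD (j' + 2 - 1) (by omega), hgetD (j' + 2) (by omega)]
        have e1 : j' + 2 - 1 + 1 = j' + 3 - 1 := by omega
        rw [e1]
        exact hge
      · rw [hgetD (j' + 2) (by omega), hgetD (j' + 2 + 1) (by omega)]
        exact hle

/-- If the associated sequence of a word starting with `0` avoiding `000`,`111` has a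
valley, then the word contains an instance of `x xᴿ x`. -/
theorem stmt3 (w : List Bool) (h0 : w.head? = some false) (hc : AvoidsCubes w)
    (As : List (List Bool)) (bs : List Bool) (hf : IsFact As bs w)
    (j : ℕ) (hj1 : 1 ≤ j) (hj2 : j + 1 < (seqOf As).length)
    (hge : (seqOf As).getD (j - 1) 0 ≥ (seqOf As).getD j 0)
    (hle : (seqOf As).getD j 0 ≤ (seqOf As).getD (j + 1) 0) :
    ¬ AvoidsP w := by
  obtain ⟨hlen, halt, rfl⟩ := hf
  exact main_lemma As bs j hlen halt hc hj1 hj2 hge hle
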